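/- arXiv:1607.04078 — 2 statements merged into one kernel-verified Lean document; each statement's English description precedes it below -/
import Mathlib

section
/- Let 𝒰 ⊆ ℤⁿ be a set of primitive integer vectors containing the standard basis e₁,…,eₙ and with the property that any n linearly independent elements of 𝒰 form a ℤ-basis of ℤⁿ. Then every element u of 𝒰 has all its coordinates in {−1, 0, 1}; in particular 𝒰 is finite. -/
/-- If `𝒰 ⊆ ℤⁿ` consists of primitive vectors, contains the standard basis,
and any `n` linearly independent members form a `ℤ`-basis of `ℤⁿ` (the matrix with
those columns has determinant `±1`), then every `u ∈ 𝒰` has coordinates in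
`{-1,0,1}`; in particular `𝒰` is finite. -/
theorem stmt_4 (n : ℕ) (𝒰 : Set (Fin n → ℤ))
    (hprim : ∀ u ∈ 𝒰, Finset.univ.gcd u = 1)
    (hbasis : ∀ i : Fin n, (fun j => if j = i then (1 : ℤ) else 0) ∈ 𝒰)
    (hZbasis : ∀ v : Fin n → (Fin n → ℤ), (∀ k, v k ∈ 𝒰) →
      (Matrix.of fun i k => v k i).det ≠ 0 →
      (Matrix.of fun i k => v k i).det = 1 ∨ (Matrix.of fun i k => v k i).det = -1) :
    (∀ u ∈ 𝒰, ∀ i, u i ∈ ({-1, 0, 1} : Set ℤ)) ∧ 𝒰.Finite := by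
  have key : ∀ u ∈ 𝒰, ∀ i, u i ∈ ({-1, 0, 1} : Set ℤ) := by
    intro u hu i
    by_cases h0 : u i = 0
    · simp [h0]
    · set v : Fin n → (Fin n → ℤ) := fun k =>
        if k = i then u else (fun j => if j = k then (1 : ℤ) else 0) with hv
      have hvmem : ∀ k, v k ∈ 𝒰 := by
        intro k
        by_cases hk : k = i
        · simpa [hv, hk] using hu
        · simpa [hv, hk] using hbasis k
      have hM : (Matrix.of fun i' k => v k i') = (1 : Matrix (Fin n) (Fin n) ℤ).updateCol i u := by
        ext i' k
        by_cases hk : k = i <;>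
          simp [hv, hk, Matrix.updateCol_apply, Matrix.one_apply]
      have hdet : (Matrix.of fun i' k => v k i').det = u i := by
        rw [hM, ← Matrix.cramer_apply, Matrix.cramer_one]
        rfl
      have := hZbasis v hvmem (by rw [hdet]; exact h0)
      rw [hdet] at this
      rcases this with h | h <;> simp [h]
  refine ⟨key, ?_⟩
  have hsub : 𝒰 ⊆ Set.pi Set.univ (fun _ : Fin n => ({-1, 0, 1} : Set ℤ)) := by
    intro u hu i _
    exact key u hu i
  exact Set.Finite.subset (Set.Finite.pi (fun _ => (Set.finite_singleton _).insert _ |>.insert _)) hsub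
end

section
/- Let 𝒰 ⊆ ℤⁿ be a set of primitive vectors spanning ℝⁿ such that whenever v₁,…,vₙ ∈ 𝒰 are linearly independent they form a ℤ-basis of ℤⁿ. Then 𝒰 is finite. -/
open scoped Matrix


/-- If `𝒰 ⊆ ℤⁿ` consists of primitive vectors whose real span is all of `ℝⁿ`,
and any `n` linearly independent members form a `ℤ`-basis of `ℤⁿ`, then
`𝒰` is finite. -/
theorem stmt_5 (n : ℕ) (𝒰 : Set (Fin n → ℤ))
    (hprim : ∀ u ∈ 𝒰, Finset.univ.gcd u = 1)
    (hspan : Submodule.span ℝ ((fun u : Fin n → ℤ => fun i => (u i : ℝ)) '' 𝒰) = ⊤)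
    (hZbasis : ∀ v : Fin n → (Fin n → ℤ), (∀ k, v k ∈ 𝒰) →
      (Matrix.of fun i k => v k i).det ≠ 0 →
      (Matrix.of fun i k => v k i).det = 1 ∨ (Matrix.of fun i k => v k i).det = -1) :
    𝒰.Finite := by
  classical
  set f : (Fin n → ℤ) → (Fin n → ℝ) := fun u => fun i => (u i : ℝ) with hf
  -- extract a linearly independent spanning subset of the real image
  obtain ⟨b, hbsub, hbspan, hbli⟩ := exists_linearIndependent ℝ (f '' 𝒰)
  rw [hspan] at hbspan
  have hbfin : b.Finite := hbli.setFinite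
  haveI : Fintype b := hbfin.fintype
  -- b is a basis of ℝⁿ
  let B : Module.Basis b ℝ (Fin n → ℝ) := Module.Basis.mk hbli (by rw [Subtype.range_coe, hbspan])
  have hcard : Fintype.card b = n := by
    have := Module.finrank_eq_card_basis B
    simpa [Module.finrank_fin_fun] using this.symm
  let e : Fin n ≃ b := (Fintype.equivFinOfCardEq hcard).symm
  -- choose integer preimages
  have hchoice : ∀ k : Fin n, ∃ u ∈ 𝒰, f u = (e k : Fin n → ℝ) := by
    intro k
    have : (e k : Fin n → ℝ) ∈ f '' 𝒰 := hbsub (e k).2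
    obtain ⟨u, hu, hfu⟩ := this
    exact ⟨u, hu, hfu⟩
  choose v hv𝒰 hvf using hchoice
  set M : Matrix (Fin n) (Fin n) ℤ := Matrix.of fun i k => v k i with hM
  -- det M ≠ 0
  have hli : LinearIndependent ℝ (fun k : Fin n => (e k : Fin n → ℝ)) :=
    hbli.comp e e.injective
  have hsp : Submodule.span ℝ (Set.range fun k : Fin n => (e k : Fin n → ℝ)) = ⊤ := by
    have : (Set.range fun k : Fin n => (e k : Fin n → ℝ)) = b := by
      ext x; simp [e.surjective.exists, Subtype.exists]
      constructor
      · rintro ⟨k, rfl⟩; exact (e k).2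
      · intro hx; exact ⟨e.symm ⟨x, hx⟩, by simp⟩
    rw [this, hbspan]
  have hdetR : IsUnit ((Pi.basisFun ℝ (Fin n)).det fun k => (e k : Fin n → ℝ)) :=
    (Module.Basis.is_basis_iff_det _).mp ⟨hli, hsp⟩
  have hdetM : M.det ≠ 0 := by
    intro h0
    have hcast : (Matrix.of fun i k => ((e k : Fin n → ℝ)) i).det = ((M.det : ℤ) : ℝ) := by
      have : (Matrix.of fun i k => ((e k : Fin n → ℝ)) i)
          = (Int.castRingHom ℝ).mapMatrix M := by
        ext i k
        simp [M, ← hvf k, f]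
      rw [this, ← RingHom.map_det]
      simp
    rw [Module.Basis.det_apply] at hdetR
    have htm : (Pi.basisFun ℝ (Fin n)).toMatrix (fun k => (e k : Fin n → ℝ))
        = Matrix.of fun i k => ((e k : Fin n → ℝ)) i := by
      ext i k; simp [Module.Basis.toMatrix_apply]
    rw [htm, hcast, h0] at hdetR
    simp at hdetR
  have hdet1 : M.det = 1 ∨ M.det = -1 := hZbasis v hv𝒰 hdetM
  have hunit : IsUnit M.det := by
    rcases hdet1 with h | h <;> simp [h]
  -- inverse coordinates lie in {-1,0,1}
  have hcoord : ∀ u ∈ 𝒰, ∀ k, (M⁻¹ *ᵥ u) k ∈ ({-1, 0, 1} : Set ℤ) := by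
    intro u hu k
    set c : Fin n → ℤ := M⁻¹ *ᵥ u with hc
    have huc : M *ᵥ c = u := by
      rw [hc, Matrix.mulVec_mulVec, Matrix.mul_nonsing_inv M hunit, Matrix.one_mulVec]
    set v' : Fin n → (Fin n → ℤ) := Function.update v k u with hv'
    have hmat : (Matrix.of fun i k' => v' k' i) = M.updateCol k u := by
      ext i k'
      by_cases h : k' = k <;> simp [v', Matrix.updateCol_apply, h, Function.update_apply, M]
    have hdet' : (Matrix.of fun i k' => v' k' i).det = M.det * c k := by
      rw [hmat, ← Matrix.cramer_apply, ← huc, Matrix.cramer_eq_adjugate_mulVec,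
        Matrix.mulVec_mulVec, Matrix.adjugate_mul, Matrix.smul_mulVec,
        Matrix.one_mulVec]
      simp [huc]
    have hmem : ∀ k', v' k' ∈ 𝒰 := by
      intro k'
      by_cases h : k' = k <;> simp [v', Function.update_apply, h, hu, hv𝒰]
    by_cases h0 : (Matrix.of fun i k' => v' k' i).det = 0
    · have : M.det * c k = 0 := by rw [← hdet', h0]
      have : c k = 0 := by
        rcases hdet1 with h | h <;> rw [h] at this <;> omega
      simp [this]
    · rcases hZbasis v' hmem h0 with h | h <;> rw [hdet'] at h <;>
        rcases hdet1 with h1 | h1 <;> rw [h1] at h <;>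
        simp only [Set.mem_insert_iff, Set.mem_singleton_iff] <;> omega
  -- conclude finiteness
  have hsubset : 𝒰 ⊆ (fun c => M *ᵥ c) '' (Set.pi Set.univ fun _ : Fin n => ({-1, 0, 1} : Set ℤ)) := by
    intro u hu
    refine ⟨M⁻¹ *ᵥ u, fun k _ => hcoord u hu k, ?_⟩
    show M *ᵥ (M⁻¹ *ᵥ u) = u
    rw [Matrix.mulVec_mulVec, Matrix.mul_nonsing_inv M hunit, Matrix.one_mulVec]
  exact (Set.Finite.image _ (Set.Finite.pi fun _ => (Set.finite_singleton _).insert _ |>.insert _)).subset hsubset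
end
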